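/- If at least one of k, ℓ is odd, then R(K_{1,k}, K_{1,ℓ}) = k+ℓ. -/

import Mathlib

open SimpleGraph Function

lemma star_iff {V : Type*} [Fintype V] (G : SimpleGraph V) [DecidableRel G.Adj] (k : ℕ) :
    (∃ f : completeBipartiteGraph (Fin 1) (Fin k) →g G, Function.Injective f) ↔
      ∃ v, k ≤ G.degree v := by
  constructor
  · rintro ⟨f, hf⟩
    refine ⟨f (Sum.inl 0), ?_⟩
    have : ∀ i : Fin k, f (Sum.inr i) ∈ G.neighborSet (f (Sum.inl 0)) := by
      intro i
      exact f.map_adj (by simp)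
    have hinj : Function.Injective (fun i : Fin k => (⟨f (Sum.inr i), this i⟩ : G.neighborSet (f (Sum.inl 0)))) := by
      intro i j hij
      simpa using hf (congrArg Subtype.val hij)
    calc k = Fintype.card (Fin k) := (Fintype.card_fin k).symm
      _ ≤ Fintype.card (G.neighborSet (f (Sum.inl 0))) := Fintype.card_le_of_injective _ hinj
      _ = G.degree (f (Sum.inl 0)) := G.card_neighborSet_eq_degree _
  · rintro ⟨v, hv⟩
    classical
    obtain ⟨e⟩ : Nonempty (Fin k ↪ G.neighborSet v) :=
      Function.Embedding.nonempty_of_card_le (by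
        rwa [Fintype.card_fin, G.card_neighborSet_eq_degree])
    refine ⟨⟨Sum.elim (fun _ => v) (fun i => (e i : V)), ?_⟩, ?_⟩
    · rintro (a | a) (b | b) hab <;> simp_all [completeBipartiteGraph]
      · exact ((e b).2 : G.Adj v _)
      · exact G.adj_symm ((e a).2 : G.Adj v _)
    · rintro (a | a) (b | b) hab
      · simp [Subsingleton.elim a b]
      · have h2 : v = (e b : V) := hab
        exact absurd ((e b).2 : G.Adj v _) (by rw [← h2]; simp)
      · have h2 : (e a : V) = v := hab
        exact absurd ((e a).2 : G.Adj v _) (by rw [h2]; simp)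
      · simpa using e.injective (Subtype.ext (by simpa using hab))

open SimpleGraph Function Finset

/-- Circulant-type graph from a symmetric finset avoiding 0. -/
def circ {n : ℕ} [NeZero n] (S : Finset (Fin n)) (h0 : (0:Fin n) ∉ S)
    (hs : ∀ x, x ∈ S → -x ∈ S) : SimpleGraph (Fin n) where
  Adj i j := j - i ∈ S
  symm := by
    constructor
    intro i j hij
    have := hs _ hij
    simpa [neg_sub] using this
  loopless := by constructor; intro i; simpa using h0

lemma circ_degree {n : ℕ} [NeZero n] (S : Finset (Fin n)) (h0 : (0:Fin n) ∉ S)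
    (hs : ∀ x, x ∈ S → -x ∈ S) [DecidableRel (circ S h0 hs).Adj] (v : Fin n) :
    (circ S h0 hs).degree v = S.card := by
  classical
  rw [← SimpleGraph.card_neighborFinset_eq_degree]
  have : (circ S h0 hs).neighborFinset v = S.image (· + v) := by
    ext w
    simp only [mem_neighborFinset, mem_image]
    constructor
    · intro hw
      exact ⟨w - v, hw, by simp⟩
    · rintro ⟨x, hx, rfl⟩
      simpa [circ] using hx
  rw [this, Finset.card_image_of_injective _ (add_left_injective v)]

lemma exists_regular_finset (n d : ℕ) [NeZero n] (hn : 1 ≤ n) (hd : d ≤ n - 1)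
    (hpar : d % 2 = 1 → n % 2 = 0) :
    ∃ S : Finset (Fin n), (0:Fin n) ∉ S ∧ (∀ x, x ∈ S → -x ∈ S) ∧ S.card = d := by
  set h : ℕ := d / 2 with hh
  set C : Finset ℕ := if d % 2 = 1 then ({n/2} : Finset ℕ) else ∅ with hC
  set T : Finset ℕ := (Finset.Icc 1 h ∪ Finset.Icc (n-h) (n-1)) ∪ C with hT
  have hCmem : ∀ v, v ∈ C ↔ d % 2 = 1 ∧ v = n / 2 := by
    intro v; rw [hC]; split_ifs with hd2 <;> simp [hd2]
  have hTmem : ∀ v, v ∈ T ↔ ((1 ≤ v ∧ v ≤ h) ∨ (n - h ≤ v ∧ v ≤ n-1) ∨ (d%2=1 ∧ v = n/2)) := by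
    intro v; rw [hT]; simp [Finset.mem_union, Finset.mem_Icc, hCmem v, or_assoc]
  have hTrange : ∀ v ∈ T, 1 ≤ v ∧ v ≤ n - 1 := by
    intro v hv
    rw [hTmem] at hv
    by_cases hd2 : d % 2 = 1
    · have hn2 := hpar hd2; omega
    · omega
  have hTsym : ∀ v ∈ T, n - v ∈ T := by
    intro v hv
    rw [hTmem] at hv ⊢
    by_cases hd2 : d % 2 = 1
    · have hn2 := hpar hd2; omega
    · omega
  have hTcard : T.card = d := by
    have hdisj1 : Disjoint (Finset.Icc 1 h) (Finset.Icc (n-h) (n-1)) := by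
      rw [Finset.disjoint_left]
      intro a ha hb
      simp only [Finset.mem_Icc] at ha hb
      omega
    have hdisj2 : Disjoint (Finset.Icc 1 h ∪ Finset.Icc (n-h) (n-1)) C := by
      rw [Finset.disjoint_left]
      intro a ha hb
      rw [hCmem] at hb
      simp only [Finset.mem_union, Finset.mem_Icc] at ha
      have hn2 := hpar hb.1
      omega
    rw [hT, Finset.card_union_of_disjoint hdisj2, Finset.card_union_of_disjoint hdisj1,
      Nat.card_Icc, Nat.card_Icc]
    have hCcard : C.card = d % 2 := by
      rw [hC]; split_ifs with hd2 <;> simp [hd2]; omega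
    rw [hCcard]
    omega
  refine ⟨Finset.univ.filter (fun x : Fin n => x.val ∈ T), ?_, ?_, ?_⟩
  · simp only [Finset.mem_filter, Finset.mem_univ, true_and]
    intro h0
    have := hTrange _ h0
    simp at this
  · intro x hx
    simp only [Finset.mem_filter, Finset.mem_univ, true_and] at hx ⊢
    have hr := hTrange _ hx
    have hv : (-x).val = n - x.val := by
      have : (-x).val = (n - x.val) % n := rfl
      rw [this, Nat.mod_eq_of_lt (by omega)]
    rw [hv]
    exact hTsym _ hx
  · rw [← hTcard]
    apply Finset.card_bij (fun x _ => x.val)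
    · intro a ha; simpa using (Finset.mem_filter.1 ha).2
    · intro a _ b _ hab; exact Fin.val_injective hab
    · intro b hb
      have hr := hTrange _ hb
      exact ⟨⟨b, by omega⟩, by simpa using hb, rfl⟩

/-- If at least one of `k, ℓ ≥ 1` is odd, then `R(K_{1,k}, K_{1,ℓ}) = k+ℓ`:
every 2-colouring of `K_{k+ℓ}` contains a red star with `k` edges or a blue star
with `ℓ` edges, and some 2-colouring of `K_{k+ℓ-1}` has neither. -/
theorem stmt_12 (k ℓ : ℕ) (hk : 1 ≤ k) (hℓ : 1 ≤ ℓ) (hodd : Odd k ∨ Odd ℓ) :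
    (∀ R : SimpleGraph (Fin (k + ℓ)),
      (∃ f : completeBipartiteGraph (Fin 1) (Fin k) →g R, Function.Injective f) ∨
      (∃ f : completeBipartiteGraph (Fin 1) (Fin ℓ) →g Rᶜ, Function.Injective f)) ∧
    (∃ R : SimpleGraph (Fin (k + ℓ - 1)),
      (¬ ∃ f : completeBipartiteGraph (Fin 1) (Fin k) →g R, Function.Injective f) ∧
      (¬ ∃ f : completeBipartiteGraph (Fin 1) (Fin ℓ) →g Rᶜ, Function.Injective f)) := by
  classical
  have hmod : k % 2 = 1 ∨ ℓ % 2 = 1 := by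
    rcases hodd with h | h
    · exact Or.inl (Nat.odd_iff.1 h)
    · exact Or.inr (Nat.odd_iff.1 h)
  constructor
  · intro R
    set v : Fin (k + ℓ) := ⟨0, by omega⟩ with hv
    have hdeg : Rᶜ.degree v = (k + ℓ) - 1 - R.degree v := by
      simpa [Fintype.card_fin] using R.degree_compl (v := v)
    have hlt : R.degree v < k + ℓ := by
      simpa [Fintype.card_fin] using R.degree_lt_card_verts v
    by_cases hK : k ≤ R.degree v
    · exact Or.inl ((star_iff R k).2 ⟨v, hK⟩)
    · refine Or.inr ((star_iff Rᶜ ℓ).2 ⟨v, ?_⟩)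
      rw [hdeg]
      omega
  · haveI : NeZero (k + ℓ - 1) := ⟨by omega⟩
    obtain ⟨S, h0, hs, hcard⟩ :=
      exists_regular_finset (k + ℓ - 1) (k - 1) (by omega) (by omega) (by omega)
    refine ⟨circ S h0 hs, ?_, ?_⟩
    · rw [star_iff]
      rintro ⟨v, hv⟩
      rw [circ_degree, hcard] at hv
      omega
    · rw [star_iff]
      rintro ⟨v, hv⟩
      have hdeg : (circ S h0 hs)ᶜ.degree v = (k + ℓ - 1) - 1 - (circ S h0 hs).degree v := by
        simpa [Fintype.card_fin] using (circ S h0 hs).degree_compl (v := v)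
      rw [hdeg, circ_degree, hcard] at hv
      omega
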